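/- For any distributive lattice L, there is an embedding of L into a complete Boolean algebra that preserves all existing finite meets, all existing exact joins, and all existing exact meets. -/

import Mathlib

open Order Set TopologicalSpace

universe u

namespace Funayama

variable {L : Type u} [DistribLattice L]

/-- The bounded completion of `L`. -/
abbrev Lb (L : Type u) [DistribLattice L] : Type u := WithTop (WithBot L)

def toLb (a : L) : Lb L := ((a : WithBot L) : Lb L)

lemma toLb_le_toLb {a b : L} : toLb a ≤ toLb b ↔ a ≤ b := by
  simp [toLb]

lemma toLb_inf (a b : L) : toLb (a ⊓ b) = toLb a ⊓ toLb b := by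
  simp only [toLb, WithBot.coe_inf, WithTop.coe_inf]

lemma toLb_sup (a b : L) : toLb (a ⊔ b) = toLb a ⊔ toLb b := by
  simp only [toLb, WithBot.coe_sup, WithTop.coe_sup]

/-- Pull back an ideal of `Lb L` to `L`, given a nonemptiness witness. -/
def pullIdeal (J : Order.Ideal (Lb L)) (x0 : L) (hx0 : toLb x0 ∈ J) : Order.Ideal L where
  carrier := {x | toLb x ∈ J}
  lower' := fun x y hxy hx => J.lower (toLb_le_toLb.2 hxy) hx
  nonempty' := ⟨x0, hx0⟩
  directed' := fun x hx y hy =>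
    ⟨x ⊔ y, by
      show toLb (x ⊔ y) ∈ J
      rw [toLb_sup]
      exact Order.Ideal.sup_mem hx hy, le_sup_left, le_sup_right⟩

@[simp] lemma mem_pullIdeal {J : Order.Ideal (Lb L)} {x0 : L} {hx0 : toLb x0 ∈ J} {x : L} :
    x ∈ pullIdeal J x0 hx0 ↔ toLb x ∈ J := Iff.rfl

/-- Prime ideal separation for a (possibly unbounded) distributive lattice. -/
lemma exists_prime {p q : L} (h : ¬ p ≤ q) :
    ∃ I : Order.Ideal L, I.IsPrime ∧ q ∈ I ∧ p ∉ I := by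
  have hdisj : Disjoint ((Order.PFilter.principal (toLb p) : Order.PFilter (Lb L)) : Set (Lb L))
      ((Order.Ideal.principal (toLb q) : Order.Ideal (Lb L)) : Set (Lb L)) := by
    rw [Set.disjoint_left]
    rintro x hx hx'
    exact h (toLb_le_toLb.1
      ((Order.PFilter.mem_principal.1 hx).trans (Order.Ideal.mem_principal.1 hx')))
  obtain ⟨J, hJprime, hJle, hJdisj⟩ :=
    DistribLattice.prime_ideal_of_disjoint_filter_ideal hdisj
  have hq : toLb q ∈ J := hJle (Order.Ideal.mem_principal.2 le_rfl)
  have hp : toLb p ∉ J := fun hmem =>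
    Set.disjoint_left.1 hJdisj (Order.PFilter.mem_principal.2 le_rfl) hmem
  refine ⟨pullIdeal J q hq, ?_, hq, hp⟩
  haveI : (pullIdeal J q hq).IsProper := Order.Ideal.isProper_of_notMem hp
  apply Order.Ideal.IsPrime.of_mem_or_mem
  intro x y hxy
  have : toLb x ⊓ toLb y ∈ J := by rw [← toLb_inf]; exact hxy
  exact hJprime.mem_or_mem this


/-! ### The spectrum -/

variable (L) in
def Spec : Type u := {I : Order.Ideal L // I.IsPrime}

def E (a : L) : Set (Spec L) := {I | a ∉ I.1}

variable (L) in
def specBasis : Set (Set (Spec L)) := {V | ∃ a b : L, V = E a ∩ (E b)ᶜ}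

instance : TopologicalSpace (Spec L) := generateFrom (specBasis L)

lemma E_antitone {a b : L} (hab : a ≤ b) : E a ⊆ E b := by
  intro I hI hb
  exact hI (I.1.lower hab hb)

lemma E_inf (a b : L) : E (a ⊓ b) = E a ∩ E b := by
  ext I
  constructor
  · intro hI
    exact ⟨fun ha => hI (I.1.lower inf_le_left ha),
           fun hb => hI (I.1.lower inf_le_right hb)⟩
  · rintro ⟨ha, hb⟩ hI
    rcases I.2.mem_or_mem hI with h | h
    · exact ha h
    · exact hb h

lemma isBasis : IsTopologicalBasis (specBasis L) := by
  refine ⟨?_, ?_, rfl⟩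
  · rintro V1 ⟨a1, b1, rfl⟩ V2 ⟨a2, b2, rfl⟩ I ⟨⟨ha1, hb1⟩, ⟨ha2, hb2⟩⟩
    refine ⟨E (a1 ⊓ a2) ∩ (E (b1 ⊔ b2))ᶜ, ⟨_, _, rfl⟩, ⟨?_, ?_⟩, ?_⟩
    · rw [E_inf]; exact ⟨ha1, ha2⟩
    · simp only [Set.mem_compl_iff, E, Set.mem_setOf_eq, not_not] at hb1 hb2 ⊢
      exact Order.Ideal.sup_mem hb1 hb2
    · rintro J ⟨haJ, hbJ⟩
      rw [E_inf] at haJ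
      simp only [Set.mem_compl_iff, E, Set.mem_setOf_eq, not_not] at hbJ
      exact ⟨⟨haJ.1, not_not_intro (J.1.lower le_sup_left hbJ)⟩,
             ⟨haJ.2, not_not_intro (J.1.lower le_sup_right hbJ)⟩⟩
  · apply Set.eq_univ_iff_forall.2
    intro I
    obtain ⟨b, hb⟩ := I.1.nonempty
    obtain ⟨a, ha⟩ : ∃ a, a ∉ I.1 := by
      by_contra hc
      push_neg at hc
      exact ((Order.Ideal.isProper_iff I.1).1 I.2.toIsProper) (Set.eq_univ_iff_forall.2 hc)
    exact ⟨E a ∩ (E b)ᶜ, ⟨a, b, rfl⟩, ⟨ha, fun h => h hb⟩⟩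

lemma isOpen_basic (a b : L) : IsOpen (E a ∩ (E b)ᶜ) :=
  isBasis.isOpen ⟨a, b, rfl⟩

lemma isOpen_E (a : L) : IsOpen (E a) := by
  have : E a = ⋃ b : L, E a ∩ (E b)ᶜ := by
    ext I
    simp only [Set.mem_iUnion, Set.mem_inter_iff, Set.mem_compl_iff, not_not]
    constructor
    · intro h
      obtain ⟨b, hb⟩ := I.1.nonempty
      exact ⟨b, h, fun hb' => hb' hb⟩
    · rintro ⟨b, h, _⟩; exact h
  rw [this]
  exact isOpen_iUnion fun b => isOpen_basic a b

lemma isOpen_compl_E (b : L) : IsOpen (E b)ᶜ := by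
  have : (E b)ᶜ = ⋃ a : L, E a ∩ (E b)ᶜ := by
    ext I
    simp only [Set.mem_iUnion, Set.mem_inter_iff, Set.mem_compl_iff]
    constructor
    · intro h
      obtain ⟨a, ha⟩ : ∃ a, a ∉ I.1 := by
        by_contra hc
        push_neg at hc
        exact ((Order.Ideal.isProper_iff I.1).1 I.2.toIsProper) (Set.eq_univ_iff_forall.2 hc)
      exact ⟨a, ha, h⟩
    · rintro ⟨a, _, h⟩; exact h
  rw [this]
  exact isOpen_iUnion fun a => isOpen_basic a b

lemma isClopen_E (a : L) : IsClopen (E a) :=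
  ⟨isOpen_compl_iff.1 (isOpen_compl_E a), isOpen_E a⟩


/-! ### Regular open sets -/

variable (L) in
/-- Regularization operator. -/
def reg (U : Set (Spec L)) : Set (Spec L) := interior (closure U)

lemma reg_mono {U V : Set (Spec L)} (h : U ⊆ V) : reg L U ⊆ reg L V :=
  interior_mono (closure_mono h)

lemma isOpen_reg (U : Set (Spec L)) : IsOpen (reg L U) := isOpen_interior

lemma subset_reg {U : Set (Spec L)} (hU : IsOpen U) : U ⊆ reg L U :=
  hU.subset_interior_iff.2 subset_closure

lemma reg_reg (U : Set (Spec L)) : reg L (reg L U) = reg L U := by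
  apply subset_antisymm
  · exact interior_mono (closure_minimal interior_subset isClosed_closure)
  · exact subset_reg (isOpen_reg U)

lemma reg_of_clopen {U : Set (Spec L)} (hU : IsClopen U) : reg L U = U := by
  rw [reg, hU.1.closure_eq, hU.2.interior_eq]

variable (L) in
/-- The type of regular open subsets of the spectrum. -/
def RO : Type u := {U : Set (Spec L) // reg L U = U}

namespace RO

instance : SetLike (RO L) (Spec L) where
  coe U := U.1
  coe_injective := Subtype.coe_injective

lemma isOpen_coe (U : RO L) : IsOpen (U.1 : Set (Spec L)) := U.2 ▸ isOpen_reg U.1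

instance : PartialOrder (RO L) := Subtype.partialOrder _

lemma le_iff {U V : RO L} : U ≤ V ↔ U.1 ⊆ V.1 := Iff.rfl

/-- Constructor keeping the type `RO L` un-unfolded. -/
def mk' (U : Set (Spec L)) (h : reg L U = U) : RO L := ⟨U, h⟩

@[simp] lemma coe_mk' (U : Set (Spec L)) (h : reg L U = U) : (mk' U h).1 = U := rfl

/-- The closure operator from opens to regular opens. -/
def toRO (U : Opens (Spec L)) : RO L := ⟨reg L U.1, reg_reg U.1⟩

def toOpens (U : RO L) : Opens (Spec L) := ⟨U.1, isOpen_coe U⟩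

lemma gc : GaloisConnection (toRO (L := L)) toOpens := by
  intro U V
  constructor
  · intro h
    show (U : Set (Spec L)) ⊆ V.1
    exact le_trans (subset_reg U.2) h
  · intro h
    show reg L (U : Set (Spec L)) ⊆ V.1
    rw [← V.2]
    exact reg_mono h

def gi : GaloisInsertion (toRO (L := L)) toOpens :=
  gc.toGaloisInsertion (fun V => le_iff.2 (subset_reg (isOpen_coe V)))

instance : CompleteLattice (RO L) := gi.liftCompleteLattice

lemma coe_inf (U V : RO L) : (U ⊓ V).1 = U.1 ∩ V.1 := by
  have hreg : reg L (U.1 ∩ V.1) = U.1 ∩ V.1 := by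
    apply subset_antisymm
    · calc reg L (U.1 ∩ V.1) ⊆ reg L U.1 ∩ reg L V.1 :=
            Set.subset_inter (reg_mono Set.inter_subset_left) (reg_mono Set.inter_subset_right)
      _ = U.1 ∩ V.1 := by rw [U.2, V.2]
    · exact subset_reg ((isOpen_coe U).inter (isOpen_coe V))
  have h1 : U ⊓ V ≤ U := inf_le_left
  have h2 : U ⊓ V ≤ V := inf_le_right
  have h3 : mk' (U.1 ∩ V.1) hreg ≤ U ⊓ V :=
    le_inf (le_iff.2 Set.inter_subset_left) (le_iff.2 Set.inter_subset_right)
  exact subset_antisymm (Set.subset_inter (le_iff.1 h1) (le_iff.1 h2)) (le_iff.1 h3)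

lemma coe_sup (U V : RO L) : (U ⊔ V).1 = reg L (U.1 ∪ V.1) := by
  have hUV : IsOpen (U.1 ∪ V.1) := (isOpen_coe U).union (isOpen_coe V)
  apply subset_antisymm
  · have : U ⊔ V ≤ mk' (reg L (U.1 ∪ V.1)) (reg_reg _) := by
      apply sup_le
      · exact le_iff.2 ((Set.subset_union_left).trans (subset_reg hUV))
      · exact le_iff.2 ((Set.subset_union_right).trans (subset_reg hUV))
    exact le_iff.1 this
  · have : U.1 ∪ V.1 ⊆ (U ⊔ V).1 :=
      Set.union_subset (le_iff.1 le_sup_left) (le_iff.1 le_sup_right)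
    rw [← (U ⊔ V).2]
    exact reg_mono this

lemma coe_sSup (S : Set (RO L)) : (sSup S).1 = reg L (⋃ U ∈ S, U.1) := by
  have hUn : IsOpen (⋃ U ∈ S, (U : RO L).1) :=
    isOpen_biUnion fun U _ => isOpen_coe U
  apply subset_antisymm
  · have : sSup S ≤ mk' (reg L (⋃ U ∈ S, U.1)) (reg_reg _) := by
      apply sSup_le
      intro U hU
      exact le_iff.2 ((Set.subset_biUnion_of_mem hU).trans (subset_reg hUn))
    exact le_iff.1 this
  · have : (⋃ U ∈ S, (U : RO L).1) ⊆ (sSup S).1 :=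
      Set.iUnion₂_subset fun U hU => le_iff.1 (le_sSup hU)
    rw [← (sSup S).2]
    exact reg_mono this

lemma coe_top : ((⊤ : RO L)).1 = Set.univ := by
  apply subset_antisymm (Set.subset_univ _)
  have hreg : reg L (Set.univ : Set (Spec L)) = Set.univ := by
    rw [reg, closure_univ, interior_univ]
  exact le_iff.1 (le_top (a := mk' Set.univ hreg))

/-- Complement: interior of the set complement. -/
def c (U : RO L) : RO L := mk' (reg L U.1ᶜ) (reg_reg _)

lemma coe_c (U : RO L) : (c U).1 = interior U.1ᶜ := by
  show reg L U.1ᶜ = interior U.1ᶜ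
  rw [reg, (isOpen_coe U).isClosed_compl.closure_eq]

lemma inf_c_le_bot (U : RO L) : U ⊓ c U ≤ ⊥ := by
  rw [le_iff, coe_inf, coe_c]
  intro x hx
  exact absurd (interior_subset hx.2) (not_not_intro hx.1)

lemma top_le_sup_c (U : RO L) : ⊤ ≤ U ⊔ c U := by
  rw [le_iff, coe_top, coe_sup, coe_c]
  have hcl : closure (U.1 ∪ interior U.1ᶜ) = Set.univ := by
    apply Set.eq_univ_iff_forall.2
    intro x
    rw [mem_closure_iff]
    intro o ho hxo
    rcases Set.eq_empty_or_nonempty (o ∩ U.1) with hem | hne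
    · refine ⟨x, hxo, Or.inr ?_⟩
      have : o ⊆ U.1ᶜ := fun z hz hz' => Set.eq_empty_iff_forall_notMem.1 hem z ⟨hz, hz'⟩
      exact interior_maximal this ho hxo
    · obtain ⟨z, hz1, hz2⟩ := hne
      exact ⟨z, hz1, Or.inl hz2⟩
  rw [reg, hcl, interior_univ]

lemma inf_sup_le (x y z : RO L) : x ⊓ (y ⊔ z) ≤ x ⊓ y ⊔ x ⊓ z := by
  rw [le_iff, coe_inf, coe_sup, coe_sup, coe_inf, coe_inf]
  have h1 : x.1 ∩ reg L (y.1 ∪ z.1) ⊆ closure (x.1 ∩ y.1 ∪ x.1 ∩ z.1) := by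
    calc x.1 ∩ reg L (y.1 ∪ z.1) ⊆ x.1 ∩ closure (y.1 ∪ z.1) :=
          Set.inter_subset_inter_right _ interior_subset
    _ ⊆ closure (x.1 ∩ (y.1 ∪ z.1)) := (isOpen_coe x).inter_closure
    _ = closure (x.1 ∩ y.1 ∪ x.1 ∩ z.1) := by rw [Set.inter_union_distrib_left]
  exact interior_maximal h1 ((isOpen_coe x).inter (isOpen_reg _))

lemma inf_sSup_le (a : RO L) (s : Set (RO L)) : a ⊓ sSup s ≤ ⨆ b ∈ s, a ⊓ b := by
  have himg : (⨆ b ∈ s, a ⊓ b) = sSup ((fun b => a ⊓ b) '' s) := (sSup_image).symm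
  rw [himg, le_iff, coe_inf, coe_sSup, coe_sSup]
  have h1 : a.1 ∩ reg L (⋃ U ∈ s, U.1) ⊆ closure (⋃ U ∈ (fun b => a ⊓ b) '' s, U.1) := by
    calc a.1 ∩ reg L (⋃ U ∈ s, U.1) ⊆ a.1 ∩ closure (⋃ U ∈ s, U.1) :=
          Set.inter_subset_inter_right _ interior_subset
    _ ⊆ closure (a.1 ∩ ⋃ U ∈ s, U.1) := (isOpen_coe a).inter_closure
    _ ⊆ closure (⋃ U ∈ (fun b => a ⊓ b) '' s, U.1) := by
        apply closure_mono
        rw [Set.inter_iUnion₂]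
        apply Set.iUnion₂_subset
        intro U hU
        rw [← coe_inf]
        exact Set.subset_biUnion_of_mem (Set.mem_image_of_mem _ hU)
  exact interior_maximal h1 ((isOpen_coe a).inter (isOpen_reg _))

lemma le_sup_iff' (x a y : RO L) : x ≤ a ⊔ y ↔ x ⊓ c a ≤ y := by
  constructor
  · intro h
    rw [le_iff, coe_inf, coe_c]
    rw [le_iff, coe_sup] at h
    have h1 : x.1 ∩ interior a.1ᶜ ⊆ closure y.1 := by
      calc x.1 ∩ interior a.1ᶜ ⊆ reg L (a.1 ∪ y.1) ∩ interior a.1ᶜ :=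
            Set.inter_subset_inter_left _ h
      _ ⊆ closure (a.1 ∪ y.1) ∩ interior a.1ᶜ :=
            Set.inter_subset_inter_left _ interior_subset
      _ = interior a.1ᶜ ∩ closure (a.1 ∪ y.1) := Set.inter_comm _ _
      _ ⊆ closure (interior a.1ᶜ ∩ (a.1 ∪ y.1)) := isOpen_interior.inter_closure
      _ ⊆ closure y.1 := by
          apply closure_mono
          rintro z ⟨hz1, hz2 | hz2⟩
          · exact absurd hz2 (interior_subset hz1)
          · exact hz2
    have h2 : x.1 ∩ interior a.1ᶜ ⊆ interior (closure y.1) :=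
      interior_maximal h1 ((isOpen_coe x).inter isOpen_interior)
    rwa [show interior (closure y.1) = y.1 from y.2] at h2
  · intro h
    calc x = x ⊓ ⊤ := (inf_top_eq x).symm
    _ ≤ x ⊓ (a ⊔ c a) := inf_le_inf_left x (top_le_sup_c a)
    _ ≤ x ⊓ a ⊔ x ⊓ c a := inf_sup_le x a (c a)
    _ ≤ a ⊔ y := sup_le_sup inf_le_right h

lemma iInf_sup_le (a : RO L) (s : Set (RO L)) : ⨅ b ∈ s, a ⊔ b ≤ a ⊔ sInf s := by
  rw [le_sup_iff']
  apply le_sInf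
  intro b hb
  rw [← le_sup_iff']
  exact iInf₂_le b hb

instance instCBA : CompleteBooleanAlgebra (RO L) :=
  { (inferInstance : CompleteLattice (RO L)) with
    compl := c
    le_sup_inf := (DistribLattice.ofInfSupLe inf_sup_le).le_sup_inf
    inf_compl_le_bot := inf_c_le_bot
    top_le_sup_compl := top_le_sup_c
    sdiff := fun a b => a ⊓ c b
    himp := fun a b => b ⊔ c a
    sdiff_eq := fun _ _ => rfl
    himp_eq := fun _ _ => rfl }

lemma ext' {U V : RO L} (h : U.1 = V.1) : U = V := Subtype.ext h

end RO

/-! ### The embedding and density lemmas -/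

def emb (a : L) : RO L := RO.mk' (E a) (reg_of_clopen (isClopen_E a))

lemma coe_emb (a : L) : (emb a).1 = E a := rfl

lemma dense_join {S : Set L} {m : L} (_hm : IsLUB S m)
    (hex : ∀ a : L, IsLUB ((fun s => a ⊓ s) '' S) (a ⊓ m)) :
    E m ⊆ closure (⋃ s ∈ S, E s) := by
  intro J hJ
  rw [isBasis.mem_closure_iff]
  rintro V ⟨a, b, rfl⟩ ⟨haJ, hbJ⟩
  have hbJ' : b ∈ J.1 := not_not.1 hbJ
  by_contra hne
  have hforall : ∀ s ∈ S, a ⊓ s ≤ b := by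
    intro s hs
    by_contra hle
    obtain ⟨I, hIp, hbI, hasI⟩ := exists_prime hle
    have haI : a ∉ I := fun h => hasI (I.lower inf_le_left h)
    have hsI : s ∉ I := fun h => hasI (I.lower inf_le_right h)
    exact hne ⟨⟨I, hIp⟩, ⟨haI, not_not_intro hbI⟩, Set.mem_biUnion hs hsI⟩
  have hub : b ∈ upperBounds ((fun s => a ⊓ s) '' S) := by
    rintro _ ⟨s, hs, rfl⟩
    exact hforall s hs
  have hab : a ⊓ m ≤ b := (hex a).2 hub
  have hmem : a ⊓ m ∈ J.1 := J.1.lower hab hbJ'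
  rcases J.2.mem_or_mem hmem with h | h
  · exact haJ h
  · exact hJ h

lemma dense_meet {S : Set L} {m : L} (_hm : IsGLB S m)
    (hex : ∀ a : L, IsGLB ((fun s => a ⊔ s) '' S) (a ⊔ m)) :
    (E m)ᶜ ⊆ closure (⋃ s ∈ S, (E s)ᶜ) := by
  intro J hJ
  rw [isBasis.mem_closure_iff]
  rintro V ⟨a, b, rfl⟩ ⟨haJ, hbJ⟩
  have hbJ' : b ∈ J.1 := not_not.1 hbJ
  have hmJ : m ∈ J.1 := not_not.1 hJ
  by_contra hne
  have hforall : ∀ s ∈ S, a ≤ b ⊔ s := by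
    intro s hs
    by_contra hle
    obtain ⟨I, hIp, hbsI, haI⟩ := exists_prime hle
    have hbI : b ∈ I := I.lower le_sup_left hbsI
    have hsI : s ∈ I := I.lower le_sup_right hbsI
    exact hne ⟨⟨I, hIp⟩, ⟨haI, not_not_intro hbI⟩,
      Set.mem_biUnion hs (not_not_intro hsI)⟩
  have hlb : a ∈ lowerBounds ((fun s => b ⊔ s) '' S) := by
    rintro _ ⟨s, hs, rfl⟩
    exact hforall s hs
  have hab : a ≤ b ⊔ m := (hex b).2 hlb
  have hmem : b ⊔ m ∈ J.1 := Order.Ideal.sup_mem hbJ' hmJ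
  exact haJ (J.1.lower hab hmem)

end Funayama

open Funayama Funayama.RO

/-- Funayama for distributive lattices: every distributive
lattice embeds into a complete Boolean algebra by a map that is
order-preserving and order-reflecting (hence injective), preserves all
existing finite meets (binary meets, and the top whenever it exists),
all existing exact joins, and all existing exact meets. -/
theorem funayama_distrib_lattice (L : Type u) [DistribLattice L] :
    ∃ (B : Type u) (inst : CompleteBooleanAlgebra B) (e : L → B),
      (∀ a b : L, a ≤ b ↔ inst.le (e a) (e b)) ∧
      (∀ a b : L, e (a ⊓ b) = inst.inf (e a) (e b)) ∧
      (∀ m : L, IsTop m → e m = inst.top) ∧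
      (∀ (S : Set L) (m : L), IsLUB S m →
        (∀ a : L, IsLUB ((fun s => a ⊓ s) '' S) (a ⊓ m)) →
        e m = inst.sSup (e '' S)) ∧
      (∀ (S : Set L) (m : L), IsGLB S m →
        (∀ a : L, IsGLB ((fun s => a ⊔ s) '' S) (a ⊔ m)) →
        e m = inst.sInf (e '' S)) := by
  refine ⟨RO L, instCBA, emb, ?_, ?_, ?_, ?_, ?_⟩
  · -- order embedding
    intro a b
    constructor
    · intro hab
      show emb a ≤ emb b
      exact le_iff.2 (E_antitone hab)
    · intro h
      have h' : E a ⊆ E b := le_iff.1 h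
      by_contra hab
      obtain ⟨I, hIp, hbI, haI⟩ := exists_prime hab
      exact (h' (show (⟨I, hIp⟩ : Spec L) ∈ E a from haI)) hbI
  · -- binary meets
    intro a b
    show emb (a ⊓ b) = emb a ⊓ emb b
    apply ext'
    rw [coe_inf, coe_emb, coe_emb, coe_emb, E_inf]
  · -- top
    intro m hm
    show emb m = ⊤
    apply ext'
    rw [coe_emb, coe_top]
    apply Set.eq_univ_iff_forall.2
    intro J hmJ
    exact (Order.Ideal.isProper_iff J.1).1 J.2.toIsProper
      (Set.eq_univ_iff_forall.2 fun x => J.1.lower (hm x) hmJ)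
  · -- exact joins
    intro S m hm hex
    show emb m = sSup (emb '' S)
    apply le_antisymm
    · rw [le_iff, coe_sSup]
      have hU : (⋃ U ∈ emb '' S, U.1) = ⋃ s ∈ S, E s := by
        ext x
        simp only [Set.mem_iUnion, exists_prop, Set.mem_image]
        constructor
        · rintro ⟨U, ⟨s, hs, rfl⟩, hx⟩; exact ⟨s, hs, hx⟩
        · rintro ⟨s, hs, hx⟩; exact ⟨emb s, ⟨s, hs, rfl⟩, hx⟩
      rw [hU]
      exact interior_maximal (dense_join hm hex) (isOpen_E m)
    · apply sSup_le
      rintro _ ⟨s, hs, rfl⟩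
      exact le_iff.2 (E_antitone (hm.1 hs))
  · -- exact meets
    intro S m hm hex
    show emb m = sInf (emb '' S)
    apply le_antisymm
    · apply le_sInf
      rintro _ ⟨s, hs, rfl⟩
      exact le_iff.2 (E_antitone (hm.1 hs))
    · rw [← compl_le_compl_iff_le, compl_sInf']
      rw [le_iff, coe_sSup]
      have hcm : ((emb m)ᶜ : RO L).1 = (E m)ᶜ := by
        rw [show ((emb m)ᶜ : RO L) = c (emb m) from rfl, coe_c, coe_emb,
          (isOpen_compl_E m).interior_eq]
      have hU : (⋃ U ∈ Compl.compl '' (emb '' S), U.1) = ⋃ s ∈ S, (E s)ᶜ := by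
        ext x
        simp only [Set.mem_iUnion, exists_prop, Set.mem_image]
        constructor
        · rintro ⟨U, ⟨V, ⟨s, hs, rfl⟩, rfl⟩, hx⟩
          refine ⟨s, hs, ?_⟩
          have : ((emb s)ᶜ : RO L).1 = (E s)ᶜ := by
            rw [show ((emb s)ᶜ : RO L) = c (emb s) from rfl, coe_c, coe_emb,
              (isOpen_compl_E s).interior_eq]
          rwa [this] at hx
        · rintro ⟨s, hs, hx⟩
          refine ⟨(emb s)ᶜ, ⟨emb s, ⟨s, hs, rfl⟩, rfl⟩, ?_⟩
          have : ((emb s)ᶜ : RO L).1 = (E s)ᶜ := by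
            rw [show ((emb s)ᶜ : RO L) = c (emb s) from rfl, coe_c, coe_emb,
              (isOpen_compl_E s).interior_eq]
          rwa [this]
      rw [hcm, hU]
      exact interior_maximal (dense_meet hm hex) (isOpen_compl_E m)
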